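/- Let n > 2, m₁ > ... > mₙ > 0, m_{s-1} > 1+r ≥ m_s for some s ∈ {2,...,n} with 1+r ≠ mₙ, I = {1,...,s-1}, J = {s,...,n}. Then for any A ⊆ Ω with J ⊆ A ≠ Ω, the minimum of Q(A) over all probability measures Q with Σₖ m_k Q({k}) = 1+r and Q ≥ 0 equals (m_ī − (1+r))/(m_ī − mₙ), where ī = max{i ∈ I : i ∉ A}. -/

import Mathlib

/-- Lower envelope of martingale measures on a set `A` with `J ⊆ A ≠ Ω`:
the minimum of `Q(A)` equals `(m ī - (1+r))/(m ī - m n)` where `ī` is the greatest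
element of `I` not in `A`. -/
theorem lower_envelope_J_subset (n : ℕ) (hn : 2 < n) (m : Fin n → ℝ)
    (hm : StrictAnti m) (hmpos : ∀ k, 0 < m k) (r : ℝ)
    (s : Fin n) (hs : 1 ≤ s.val)
    (h1 : 1 + r < m ⟨s.val - 1, Nat.lt_of_le_of_lt (Nat.sub_le _ _) s.isLt⟩)
    (h2 : m s ≤ 1 + r)
    (hrn : 1 + r ≠ m ⟨n - 1, by omega⟩)
    (A : Finset (Fin n)) (hJA : ∀ j : Fin n, s.val ≤ j.val → j ∈ A)
    (hA : A ≠ Finset.univ)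
    (i0 : Fin n) (hi0I : i0.val < s.val) (hi0A : i0 ∉ A)
    (hi0max : ∀ i : Fin n, i.val < s.val → i ∉ A → i ≤ i0) :
    IsLeast {x : ℝ | ∃ q : Fin n → ℝ, (∀ k, 0 ≤ q k) ∧ (∑ k, q k) = 1 ∧
        (∑ k, m k * q k) = 1 + r ∧ x = ∑ k ∈ A, q k}
      ((m i0 - (1 + r)) / (m i0 - m ⟨n - 1, by omega⟩)) := by
  set L : Fin n := ⟨n - 1, by omega⟩ with hLdef
  -- basic facts
  have hsL : s ≤ L := by
    simp only [Fin.le_def, hLdef]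
    omega
  have hmLs : m L ≤ m s := hm.antitone hsL
  have hmL1r : m L < 1 + r := lt_of_le_of_ne (le_trans hmLs h2) (Ne.symm hrn)
  have hi0s : m ⟨s.val - 1, Nat.lt_of_le_of_lt (Nat.sub_le _ _) s.isLt⟩ ≤ m i0 := by
    apply hm.antitone
    simp only [Fin.le_def]
    omega
  have h1ri0 : 1 + r < m i0 := lt_of_lt_of_le h1 hi0s
  have hden : 0 < m i0 - m L := by linarith
  have hLA : L ∈ A := hJA L (by simp [hLdef]; omega)
  have hi0L : i0 ≠ L := fun h => hi0A (h ▸ hLA)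
  have hmin : ∀ k : Fin n, m L ≤ m k := fun k => hm.antitone (by
    simp only [Fin.le_def, hLdef]; omega)
  constructor
  · -- membership: explicit measure
    refine ⟨fun k => (if k = i0 then ((1 + r) - m L) / (m i0 - m L) else 0) +
        (if k = L then (m i0 - (1 + r)) / (m i0 - m L) else 0), ?_, ?_, ?_, ?_⟩
    · intro k
      have h01 : 0 ≤ ((1 + r) - m L) / (m i0 - m L) := by
        apply div_nonneg <;> linarith
      have h02 : 0 ≤ (m i0 - (1 + r)) / (m i0 - m L) := by
        apply div_nonneg <;> linarith
      dsimp only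
      split_ifs <;> simp <;> linarith
    · rw [Finset.sum_add_distrib]
      rw [Finset.sum_ite_eq' Finset.univ i0 (fun _ => ((1 + r) - m L) / (m i0 - m L))]
      rw [Finset.sum_ite_eq' Finset.univ L (fun _ => (m i0 - (1 + r)) / (m i0 - m L))]
      simp only [Finset.mem_univ, if_true]
      field_simp
      ring
    · simp only [mul_add, mul_ite, mul_zero]
      rw [Finset.sum_add_distrib]
      rw [Finset.sum_ite_eq' Finset.univ i0 (fun k => m k * (((1 + r) - m L) / (m i0 - m L)))]
      rw [Finset.sum_ite_eq' Finset.univ L (fun k => m k * ((m i0 - (1 + r)) / (m i0 - m L)))]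
      simp only [Finset.mem_univ, if_true]
      field_simp
      ring
    · rw [Finset.sum_add_distrib]
      rw [Finset.sum_ite_eq' A i0 (fun _ => ((1 + r) - m L) / (m i0 - m L))]
      rw [Finset.sum_ite_eq' A L (fun _ => (m i0 - (1 + r)) / (m i0 - m L))]
      simp [hi0A, hLA]
  · -- lower bound
    rintro x ⟨q, hq0, hq1, hqm, rfl⟩
    have hsplit : ∑ k ∈ A, q k + ∑ k ∈ Aᶜ, q k = 1 := by
      rw [Finset.sum_add_sum_compl]; exact hq1
    have hsplitm : ∑ k ∈ A, m k * q k + ∑ k ∈ Aᶜ, m k * q k = 1 + r := by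
      rw [Finset.sum_add_sum_compl]; exact hqm
    have hA1 : m L * ∑ k ∈ A, q k ≤ ∑ k ∈ A, m k * q k := by
      rw [Finset.mul_sum]
      exact Finset.sum_le_sum fun k _ => mul_le_mul_of_nonneg_right (hmin k) (hq0 k)
    have hA2 : m i0 * ∑ k ∈ Aᶜ, q k ≤ ∑ k ∈ Aᶜ, m k * q k := by
      rw [Finset.mul_sum]
      refine Finset.sum_le_sum fun k hk => mul_le_mul_of_nonneg_right ?_ (hq0 k)
      rw [Finset.mem_compl] at hk
      have hks : k.val < s.val := by
        by_contra h
        exact hk (hJA k (by omega))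
      exact hm.antitone (hi0max k hks hk)
    have hc : ∑ k ∈ Aᶜ, q k = 1 - ∑ k ∈ A, q k := by linarith
    rw [hc] at hA2
    rw [div_le_iff₀ hden]
    nlinarith [hA1, hA2, hsplitm]
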